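/- If 0 ≤ ρ_S < 1, 0 ≤ ρ_G < 1 and α > 0, then for any stationary probability distribution σ of the buffer-occupancy Markov chain (i.e., σ(i) ≥ 0, Σ_{i=0}^{L} σ(i) = 1, and Σ_{i=0}^{L} σ(i)·M(i,j) = σ(j) for all j), the packet dropping probability satisfies the closed form p·σ(L) = (p/q)^L·(1−ρ_S)·π(0), where π(0) = 1/(1 + (1−ρ_S)·Σ_{i=1}^{L} p^{i−1}/q^{i}). -/

import Mathlib

/-- The buffer-occupancy Markov chain transition matrix on states `{0,…,L}`. -/
noncomputable def Mmat (L : ℕ) (ρS ρG α : ℝ) :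
    Matrix (Fin (L + 1)) (Fin (L + 1)) ℝ :=
  Matrix.of fun i j =>
    if i.val = 0 then
      -- empty buffer
      if j.val = 0 then ρS else if j.val = 1 then 1 - ρS else 0
    else if i.val = L then
      -- full buffer
      if j.val + 1 = L then α * (1 - ρG) / (1 + α)
      else if j.val = L then (1 + α * ρG) / (1 + α)
      else 0
    else
      -- interior states
      if j.val + 1 = i.val then α * (1 - ρG) / (1 + α)
      else if j.val = i.val then (ρS + α * ρG) / (1 + α)
      else if j.val = i.val + 1 then (1 - ρS) / (1 + α)
      else 0

lemma Mval (L : ℕ) (ρS ρG α : ℝ) (a b : ℕ) (ha : a < L + 1) (hb : b < L + 1) :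
    Mmat L ρS ρG α ⟨a, ha⟩ ⟨b, hb⟩ =
      if a = 0 then (if b = 0 then ρS else if b = 1 then 1 - ρS else 0)
      else if a = L then
        (if b + 1 = L then α * (1 - ρG) / (1 + α)
         else if b = L then (1 + α * ρG) / (1 + α) else 0)
      else
        (if b + 1 = a then α * (1 - ρG) / (1 + α)
         else if b = a then (ρS + α * ρG) / (1 + α)
         else if b = a + 1 then (1 - ρS) / (1 + α) else 0) := rfl

lemma sum_two' {n : ℕ} (f : Fin n → ℝ) (a b : ℕ) (ha : a < n) (hb : b < n)
    (hab : a ≠ b)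
    (h : ∀ x : Fin n, x.val ≠ a → x.val ≠ b → f x = 0) :
    ∑ x, f x = f ⟨a, ha⟩ + f ⟨b, hb⟩ := by
  have hab' : (⟨a, ha⟩ : Fin n) ≠ ⟨b, hb⟩ := by simp [Fin.ext_iff]; exact hab
  rw [← Finset.sum_subset (Finset.subset_univ ({⟨a, ha⟩, ⟨b, hb⟩} : Finset (Fin n)))
      (fun x _ hx => by
        simp only [Finset.mem_insert, Finset.mem_singleton, not_or] at hx
        exact h x (fun hv => hx.1 (Fin.ext hv)) (fun hv => hx.2 (Fin.ext hv)))]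
  rw [Finset.sum_pair hab']

lemma sum_three' {n : ℕ} (f : Fin n → ℝ) (a b c : ℕ) (ha : a < n) (hb : b < n)
    (hc : c < n) (hab : a ≠ b) (hac : a ≠ c) (hbc : b ≠ c)
    (h : ∀ x : Fin n, x.val ≠ a → x.val ≠ b → x.val ≠ c → f x = 0) :
    ∑ x, f x = f ⟨a, ha⟩ + f ⟨b, hb⟩ + f ⟨c, hc⟩ := by
  have hab' : (⟨a, ha⟩ : Fin n) ≠ ⟨b, hb⟩ := by simp [Fin.ext_iff]; exact hab
  have hac' : (⟨a, ha⟩ : Fin n) ≠ ⟨c, hc⟩ := by simp [Fin.ext_iff]; exact hac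
  have hbc' : (⟨b, hb⟩ : Fin n) ≠ ⟨c, hc⟩ := by simp [Fin.ext_iff]; exact hbc
  rw [← Finset.sum_subset
      (Finset.subset_univ ({⟨a, ha⟩, ⟨b, hb⟩, ⟨c, hc⟩} : Finset (Fin n)))
      (fun x _ hx => by
        simp only [Finset.mem_insert, Finset.mem_singleton, not_or] at hx
        exact h x (fun hv => hx.1 (Fin.ext hv)) (fun hv => hx.2.1 (Fin.ext hv))
          (fun hv => hx.2.2 (Fin.ext hv)))]
  rw [Finset.sum_insert (by simp [hab', hac']), Finset.sum_pair hbc', add_assoc]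

/-- for any stationary probability distribution `σ` of the buffer-occupancy
chain, the packet dropping probability `p·σ(L)` has the closed form
`(p/q)^L·(1−ρS)·π(0)`. -/
theorem stmt11 (L : ℕ) (hL : 1 ≤ L) (ρS ρG α : ℝ)
    (hS0 : 0 ≤ ρS) (hS1 : ρS < 1) (hG0 : 0 ≤ ρG) (hG1 : ρG < 1) (hα : 0 < α) :
    ∀ σ : Fin (L + 1) → ℝ,
      (∀ i : Fin (L + 1), 0 ≤ σ i) →
      (∑ i : Fin (L + 1), σ i = 1) →
      (∀ j : Fin (L + 1), ∑ i : Fin (L + 1), σ i * Mmat L ρS ρG α i j = σ j) →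
      (1 - ρS) / (1 + α) * σ (Fin.last L) =
        ((1 - ρS) / (1 + α) / (α * (1 - ρG) / (1 + α))) ^ L * (1 - ρS) *
          (1 / (1 + (1 - ρS) * ∑ i ∈ Finset.Icc 1 L,
            ((1 - ρS) / (1 + α)) ^ (i - 1) / (α * (1 - ρG) / (1 + α)) ^ i)) := by
  intro σ hpos hsum hstat
  set p : ℝ := (1 - ρS) / (1 + α) with hp_def
  set q : ℝ := α * (1 - ρG) / (1 + α) with hq_def
  set r : ℝ := (ρS + α * ρG) / (1 + α) with hr_def
  have hα1 : (0 : ℝ) < 1 + α := by linarith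
  have hp : 0 < p := by rw [hp_def]; exact div_pos (by linarith) hα1
  have hq : 0 < q := by rw [hq_def]; exact div_pos (mul_pos hα (by linarith)) hα1
  have h1 : p + q + r = 1 := by
    rw [hp_def, hq_def, hr_def, ← add_div, ← add_div,
      div_eq_one_iff_eq (ne_of_gt hα1)]
    ring
  set s : ℕ → ℝ := fun n => if h : n < L + 1 then σ ⟨n, h⟩ else 0 with hs_def
  have hs : ∀ n (h : n < L + 1), s n = σ ⟨n, h⟩ := fun n h => dif_pos h
  clear_value p q r s
  -- cut equations
  have cut : ∀ k, k < L → q * s (k + 1) = (if k = 0 then 1 - ρS else p) * s k := by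
    intro k
    induction k with
    | zero =>
      intro hk
      have h0 : (0 : ℕ) < L + 1 := by omega
      have h1lt : (1 : ℕ) < L + 1 := by omega
      have hb := hstat ⟨0, h0⟩
      rw [sum_two' _ 0 1 h0 h1lt (by omega)
        (fun x hxa hxb => by
          obtain ⟨xv, hxv⟩ := x
          have hxa' : xv ≠ 0 := hxa
          have hxb' : xv ≠ 1 := hxb
          have hM : Mmat L ρS ρG α ⟨xv, hxv⟩ ⟨0, h0⟩ = 0 := by
            rw [Mval]; split_ifs <;> first | rfl | omega | exact (‹False›).elim
          rw [hM, mul_zero])] at hb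
      have e1 : Mmat L ρS ρG α ⟨0, h0⟩ ⟨0, h0⟩ = ρS := by
        rw [Mval]; split_ifs <;> first | rfl | omega | exact (‹False›).elim
      have e2 : Mmat L ρS ρG α ⟨1, h1lt⟩ ⟨0, h0⟩ = q := by
        rw [Mval, hq_def]; split_ifs <;> first | rfl | omega | exact (‹False›).elim
      simp only [e1, e2, ← hs 0 h0, ← hs 1 h1lt] at hb
      rw [if_pos rfl]
      show q * s 1 = (1 - ρS) * s 0
      linear_combination hb
    | succ k ih =>
      intro hk
      have hik := ih (by omega)
      have ha : k < L + 1 := by omega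
      have hj : k + 1 < L + 1 := by omega
      have hc : k + 2 < L + 1 := by omega
      have hb' := hstat ⟨k + 1, hj⟩
      rw [sum_three' _ k (k + 1) (k + 2) ha hj hc (by omega) (by omega) (by omega)
        (fun x hxa hxb hxc => by
          obtain ⟨xv, hxv⟩ := x
          have hxa' : xv ≠ k := hxa
          have hxb' : xv ≠ k + 1 := hxb
          have hxc' : xv ≠ k + 2 := hxc
          have hM : Mmat L ρS ρG α ⟨xv, hxv⟩ ⟨k + 1, hj⟩ = 0 := by
            rw [Mval]; split_ifs <;> first | rfl | omega | exact (‹False›).elim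
          rw [hM, mul_zero])] at hb'
      have e1 : Mmat L ρS ρG α ⟨k, ha⟩ ⟨k + 1, hj⟩ = (if k = 0 then 1 - ρS else p) := by
        rw [Mval, hp_def]; split_ifs <;> first | rfl | omega | exact (‹False›).elim
      have e2 : Mmat L ρS ρG α ⟨k + 1, hj⟩ ⟨k + 1, hj⟩ = r := by
        rw [Mval, hr_def]; split_ifs <;> first | rfl | omega | exact (‹False›).elim
      have e3 : Mmat L ρS ρG α ⟨k + 2, hc⟩ ⟨k + 1, hj⟩ = q := by
        rw [Mval, hq_def]; split_ifs <;> first | rfl | omega | exact (‹False›).elim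
      simp only [e1, e2, e3, ← hs k ha, ← hs (k + 1) hj, ← hs (k + 2) hc] at hb'
      rw [if_neg (Nat.succ_ne_zero k)]
      show q * s (k + 2) = p * s (k + 1)
      linear_combination hb' + hik - s (k + 1) * h1
  -- closed form for s k
  have hqne : q ≠ 0 := ne_of_gt hq
  have form : ∀ k, 1 ≤ k → k ≤ L → s k = (1 - ρS) * p ^ (k - 1) / q ^ k * s 0 := by
    intro k
    induction k with
    | zero => intro h; omega
    | succ k ih =>
      intro _ hkL
      rcases Nat.eq_zero_or_pos k with hk0 | hk1
      · subst hk0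
        have hc := cut 0 (by omega)
        rw [if_pos rfl] at hc
        simp only [Nat.sub_self, pow_zero, pow_one]
        field_simp
        linear_combination hc
      · have hih := ih hk1 (by omega)
        have hc := cut k (by omega)
        rw [if_neg (by omega)] at hc
        have hstep : s (k + 1) = p / q * s k := by
          field_simp
          linear_combination hc
        have hpk : p * p ^ (k - 1) = p ^ k := by
          rw [← pow_succ']; congr 1; omega
        have hqk : q ^ (k + 1) = q * q ^ k := by rw [pow_succ']
        rw [Nat.add_sub_cancel, hstep, hih, ← hpk, hqk]
        have hqkne : q ^ k ≠ 0 := pow_ne_zero _ hqne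
        field_simp
  -- normalization
  set D : ℝ := 1 + (1 - ρS) * ∑ i ∈ Finset.Icc 1 L, p ^ (i - 1) / q ^ i with hD_def
  have hterm : 0 ≤ ∑ i ∈ Finset.Icc 1 L, p ^ (i - 1) / q ^ i :=
    Finset.sum_nonneg fun i _ => div_nonneg (pow_nonneg hp.le _) (pow_nonneg hq.le _)
  have hDpos : 0 < D := by
    have : 0 ≤ (1 - ρS) * ∑ i ∈ Finset.Icc 1 L, p ^ (i - 1) / q ^ i :=
      mul_nonneg (by linarith) hterm
    rw [hD_def]; linarith
  have hsum' : s 0 * D = 1 := by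
    have h2 : ∑ i : Fin (L + 1), σ i = ∑ n ∈ Finset.range (L + 1), s n := by
      rw [← Fin.sum_univ_eq_sum_range s (L + 1)]
      exact Finset.sum_congr rfl fun i _ => (hs i.val i.isLt).symm ▸ rfl
    have h3 : Finset.range (L + 1) = insert 0 (Finset.Icc 1 L) := by
      ext n; simp [Finset.mem_Icc, Finset.mem_range]; omega
    have h4 : ∑ n ∈ Finset.range (L + 1), s n
        = s 0 + ∑ n ∈ Finset.Icc 1 L, ((1 - ρS) * p ^ (n - 1) / q ^ n * s 0) := by
      rw [h3, Finset.sum_insert (by simp)]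
      congr 1
      refine Finset.sum_congr rfl fun n hn => ?_
      rw [Finset.mem_Icc] at hn
      exact form n hn.1 hn.2
    have h5 : ∑ n ∈ Finset.Icc 1 L, ((1 - ρS) * p ^ (n - 1) / q ^ n * s 0)
        = ((1 - ρS) * ∑ n ∈ Finset.Icc 1 L, p ^ (n - 1) / q ^ n) * s 0 := by
      rw [Finset.mul_sum, Finset.sum_mul]
      exact Finset.sum_congr rfl fun n _ => by ring
    have htot : s 0 + ((1 - ρS) * ∑ n ∈ Finset.Icc 1 L, p ^ (n - 1) / q ^ n) * s 0 = 1 := by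
      rw [← h5, ← h4, ← h2]; exact hsum
    rw [hD_def]
    linear_combination htot
  have hDne : D ≠ 0 := ne_of_gt hDpos
  have hs0 : s 0 = 1 / D := by
    field_simp
    linarith [hsum']
  clear_value D
  -- conclude
  have hlast : σ (Fin.last L) = s L := (hs L (by omega)).symm
  rw [hlast, form L hL le_rfl, hs0, div_pow]
  have hpL : p * p ^ (L - 1) = p ^ L := by
    rw [← pow_succ']; congr 1; omega
  rw [← hpL]
  ring
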